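/- Let m be a positive integer and let a_0, a_1, …, a_m be integers. Define the 2m×2m integer matrix w by w_{i,j} := a_i if 1 ≤ i ≤ m and 1 ≤ j ≤ m, and w_{i,j} := 0 otherwise. Then there exists a permutation σ of {1,…,2m} with Σ_{i=1}^{2m} w_{i,σ(i)} = a_0 if and only if there exists a subset I ⊆ {1,…,m} with Σ_{i∈I} a_i = a_0. -/

import Mathlib

open Finset

lemma exists_perm_mem_iff {α : Type*} [Fintype α] [DecidableEq α] (s t : Finset α)
    (h : s.card = t.card) : ∃ σ : Equiv.Perm α, ∀ x, σ x ∈ t ↔ x ∈ s := by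
  classical
  have h' : sᶜ.card = tᶜ.card := by simp [Finset.card_compl, h]
  let e : {x // x ∈ s} ≃ {x // x ∈ t} := Finset.equivOfCardEq h
  let f0 : {x // x ∈ sᶜ} ≃ {x // x ∈ tᶜ} := Finset.equivOfCardEq h'
  let f : {x // ¬ x ∈ s} ≃ {x // ¬ x ∈ t} :=
    ((Equiv.subtypeEquivRight (fun x => (Finset.mem_compl (s := s)).symm)).trans f0).trans
      (Equiv.subtypeEquivRight (fun x => Finset.mem_compl))
  refine ⟨Equiv.subtypeCongr e f, fun x => ?_⟩
  by_cases hx : x ∈ s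
  · have : Equiv.subtypeCongr e f x = (e ⟨x, hx⟩ : α) := by
      simp [Equiv.subtypeCongr, hx]
    rw [this]
    simpa [hx] using (e ⟨x, hx⟩).2
  · have : Equiv.subtypeCongr e f x = (f ⟨x, hx⟩ : α) := by
      simp [Equiv.subtypeCongr, hx]
    rw [this]
    simpa [hx] using (f ⟨x, hx⟩).2

theorem subset_sum_reduction (m : ℕ) (hm : 0 < m) (a₀ : ℤ) (a : Fin m → ℤ)
    (w : Matrix (Fin (2 * m)) (Fin (2 * m)) ℤ)
    (hw : ∀ i j, w i j =
      if h : i.val < m ∧ j.val < m then a ⟨i.val, h.1⟩ else 0) :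
    (∃ σ : Equiv.Perm (Fin (2 * m)), ∑ i, w i (σ i) = a₀) ↔
      ∃ I : Finset (Fin m), ∑ i ∈ I, a i = a₀ := by
  classical
  have hle : m ≤ 2 * m := by omega
  have key : ∀ σ : Equiv.Perm (Fin (2 * m)), ∑ i, w i (σ i)
      = ∑ i : Fin m, if ((σ (Fin.castLE hle i)).val < m) then a i else 0 := by
    intro σ
    refine (Finset.sum_of_injOn (Fin.castLE hle) ?_ ?_ ?_ ?_).symm
    · intro x _ y _ hxy; exact Fin.castLE_injective hle hxy
    · intro x _; exact Finset.mem_coe.2 (Finset.mem_univ _)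
    · intro j _ hj
      rw [hw, dif_neg]
      rintro ⟨h1, _⟩
      exact hj ⟨⟨j.val, h1⟩, Finset.mem_coe.2 (Finset.mem_univ _), by ext; rfl⟩
    · intro i _
      rw [hw]
      by_cases h : (σ (Fin.castLE hle i)).val < m
      · rw [if_pos h, dif_pos ⟨i.2, h⟩]
        rfl
      · rw [if_neg h, dif_neg (fun hc => h hc.2)]
  constructor
  · rintro ⟨σ, hσ⟩
    refine ⟨Finset.univ.filter (fun i : Fin m => (σ (Fin.castLE hle i)).val < m), ?_⟩
    rw [Finset.sum_filter, ← key σ, hσ]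
  · rintro ⟨I, hI⟩
    -- build suitable σ
    set lower : Finset (Fin (2 * m)) := Finset.univ.filter (fun j => j.val < m) with hlowdef
    have hlow : lower = Finset.univ.image (Fin.castLE hle) := by
      ext j
      simp only [hlowdef, Finset.mem_filter, Finset.mem_univ, true_and, Finset.mem_image]
      constructor
      · intro hj; exact ⟨⟨j.val, hj⟩, rfl⟩
      · rintro ⟨i, rfl⟩; exact i.2
    have hlowcard : lower.card = m := by
      rw [hlow, Finset.card_image_of_injective _ (Fin.castLE_injective hle)]
      simp
    have hIcard : I.card ≤ m := by
      simpa using Finset.card_le_card (Finset.subset_univ I)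
    have huppercard : lowerᶜ.card = m := by
      rw [Finset.card_compl, hlowcard, Fintype.card_fin]
      omega
    obtain ⟨U, hU, hUcard⟩ := Finset.exists_subset_card_eq (s := lowerᶜ) (n := m - I.card)
      (by omega)
    set s : Finset (Fin (2 * m)) := I.image (Fin.castLE hle) ∪ U with hsdef
    have hdisj : Disjoint (I.image (Fin.castLE hle)) U := by
      refine Finset.disjoint_left.2 (fun x hx hxU => ?_)
      have hxlow : x ∈ lower := by
        rw [hlow]
        obtain ⟨i, _, rfl⟩ := Finset.mem_image.1 hx
        exact Finset.mem_image.2 ⟨i, Finset.mem_univ _, rfl⟩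
      exact (Finset.mem_compl.1 (hU hxU)) hxlow
    have hscard : s.card = lower.card := by
      rw [hsdef, Finset.card_union_of_disjoint hdisj,
        Finset.card_image_of_injective _ (Fin.castLE_injective hle), hUcard, hlowcard]
      omega
    obtain ⟨σ, hσ⟩ := exists_perm_mem_iff s lower hscard
    refine ⟨σ, ?_⟩
    rw [key σ]
    have hmem : ∀ i : Fin m, ((σ (Fin.castLE hle i)).val < m) ↔ i ∈ I := by
      intro i
      have h1 : σ (Fin.castLE hle i) ∈ lower ↔ Fin.castLE hle i ∈ s := hσ _
      have h2 : σ (Fin.castLE hle i) ∈ lower ↔ (σ (Fin.castLE hle i)).val < m := by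
        simp [hlowdef]
      have h3 : Fin.castLE hle i ∈ s ↔ i ∈ I := by
        rw [hsdef, Finset.mem_union]
        constructor
        · rintro (hx | hx)
          · obtain ⟨i', hi', heq⟩ := Finset.mem_image.1 hx
            rwa [(Fin.castLE_injective hle heq : i' = i)] at hi'
          · exfalso
            have : Fin.castLE hle i ∈ lower := by
              rw [hlow]; exact Finset.mem_image.2 ⟨i, Finset.mem_univ _, rfl⟩
            exact (Finset.mem_compl.1 (hU hx)) this
        · intro hi; exact Or.inl (Finset.mem_image.2 ⟨i, hi, rfl⟩)
      rw [← h2, h1, h3]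
    calc ∑ i : Fin m, (if ((σ (Fin.castLE hle i)).val < m) then a i else 0)
        = ∑ i : Fin m, (if i ∈ I then a i else 0) := by
          refine Finset.sum_congr rfl (fun i _ => ?_)
          simp [hmem i]
      _ = a₀ := by rw [← Finset.sum_filter, Finset.filter_mem_eq_inter, Finset.univ_inter, hI]
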